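/- Let G be a group, φ an automorphism of G, and G ⋊_ψ ℤ the semidirect product where ψ : ℤ → Aut(G) is given by ψ(k) = φ^k. Let F be any group and α : G ⋊_ψ ℤ → F a group homomorphism. Suppose that for every nonzero k ∈ ℤ the automorphism φ^k is not inner (i.e., there is no ω ∈ G with φ^k(h) = ω⁻¹hω for all h ∈ G), and that the restriction of α to G (the composition of α with the inclusion g ↦ (g, 0)) is injective. Then α is injective. -/

import Mathlib

theorem stmt13 (G : Type*) [Group G] (φ : MulAut G)
    (F : Type*) [Group F]
    (α : G ⋊[zpowersHom (MulAut G) φ] Multiplicative ℤ →* F)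
    (hnoninner : ∀ k : ℤ, k ≠ 0 → ¬ ∃ ω : G, ∀ h : G, (φ ^ k) h = ω⁻¹ * h * ω)
    (hinj : Function.Injective (α.comp SemidirectProduct.inl)) :
    Function.Injective α := by
  rw [injective_iff_map_eq_one]
  rintro ⟨g, k⟩ hx
  by_cases hk : k = 1
  · subst hk
    have h1 : α (SemidirectProduct.inl g) = 1 := by
      convert hx using 2
      rfl
    have := (injective_iff_map_eq_one (α.comp SemidirectProduct.inl)).mp hinj g h1
    subst this
    rfl
  · exfalso
    apply hnoninner k.toAdd (by simpa using hk)
    refine ⟨g, fun h => ?_⟩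
    have hconj : SemidirectProduct.inl (g * (φ ^ k.toAdd) h * g⁻¹)
        = (⟨g, k⟩ : G ⋊[zpowersHom (MulAut G) φ] Multiplicative ℤ) *
          SemidirectProduct.inl h * (⟨g, k⟩ : G ⋊[zpowersHom (MulAut G) φ] Multiplicative ℤ)⁻¹ := by
      ext <;> simp [mul_assoc]
    have key : (α.comp SemidirectProduct.inl) (g * (φ ^ k.toAdd) h * g⁻¹)
        = (α.comp SemidirectProduct.inl) h := by
      rw [MonoidHom.comp_apply, MonoidHom.comp_apply, hconj, map_mul, map_mul, map_inv, hx]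
      simp
    have h2 := hinj key
    conv_rhs => rw [← h2]
    group
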